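/- Let ℳ be a finite automaton with cycle set C_ℳ and reachability preorder c ≤₀ d on C_ℳ (some state of d reachable from some state of c). If A ⊆ C_ℳ is ≤₀-upward-closed, then f_ℳ⁻¹(A) is an open subset of X^ω in the Cantor topology. -/
import Mathlib


/-- The run of an automaton on an infinite word. -/
def run {X Q : Type*} (δ : Q → X → Q) (init : Q) (ξ : ℕ → X) : ℕ → Q :=
  fun n => Nat.rec init (fun m q => δ q (ξ m)) n

/-- The set of states occurring infinitely often in the run on `ξ`. -/
def infOcc {X Q : Type*} (δ : Q → X → Q) (init : Q) (ξ : ℕ → X) : Set Q :=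
  {q | ∀ N : ℕ, ∃ n : ℕ, N ≤ n ∧ run δ init ξ n = q}

/-- The set of cycles of the automaton. -/
def cycles {X Q : Type*} (δ : Q → X → Q) (init : Q) : Set (Set Q) :=
  {c | ∃ ξ : ℕ → X, infOcc δ init ξ = c}

/-- Reachability of state `r` from state `q`. -/
def reach {X Q : Type*} (δ : Q → X → Q) (q r : Q) : Prop :=
  ∃ w : List X, w.foldl δ q = r

/-- `c ≤₀ d`: some state of `d` is reachable from some state of `c`. -/
def cle0 {X Q : Type*} (δ : Q → X → Q) (c d : Set Q) : Prop :=
  ∃ q ∈ c, ∃ r ∈ d, reach δ q r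

lemma run_succ {X Q : Type*} (δ : Q → X → Q) (init : Q) (ξ : ℕ → X) (n : ℕ) :
    run δ init ξ (n + 1) = δ (run δ init ξ n) (ξ n) := rfl

lemma infOcc_nonempty {X Q : Type*} [Finite Q] (δ : Q → X → Q) (init : Q) (ξ : ℕ → X) :
    ∃ q, q ∈ infOcc δ init ξ := by
  obtain ⟨q, hq⟩ := Finite.exists_infinite_fiber (run δ init ξ)
  refine ⟨q, fun N => ?_⟩
  by_contra h
  push_neg at h
  exact Set.infinite_coe_iff.mp hq (Set.Finite.subset (Set.finite_lt_nat N) (fun n hn => by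
    simp only [Set.mem_preimage, Set.mem_singleton_iff] at hn
    by_contra h'
    exact h n (le_of_not_gt h') hn))

lemma run_agree {X Q : Type*} (δ : Q → X → Q) (init : Q) (ξ η : ℕ → X) (N : ℕ)
    (h : ∀ i < N, η i = ξ i) : ∀ n ≤ N, run δ init η n = run δ init ξ n := by
  intro n hn
  induction n with
  | zero => rfl
  | succ m ih =>
    rw [run_succ, run_succ, ih (le_of_lt (Nat.lt_of_succ_le hn)),
      h m (Nat.lt_of_succ_le hn)]

lemma reach_run {X Q : Type*} (δ : Q → X → Q) (init : Q) (ξ : ℕ → X) (n m : ℕ)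
    (h : n ≤ m) : reach δ (run δ init ξ n) (run δ init ξ m) := by
  induction m with
  | zero => exact ⟨[], by simp [Nat.le_zero.mp h]⟩
  | succ k ih =>
    rcases Nat.lt_or_ge n (k + 1) with h' | h'
    · obtain ⟨w, hw⟩ := ih (Nat.lt_succ_iff.mp h')
      exact ⟨w ++ [ξ k], by rw [List.foldl_append, hw]; rfl⟩
    · have : n = k + 1 := le_antisymm h h'
      exact ⟨[], by simp [this]⟩

/-- If `A ⊆ C_ℳ` is `≤₀`-upward-closed, then `f_ℳ⁻¹(A)` is open in the Cantor
topology on `X^ω`. -/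
theorem stmt16 {X Q : Type*} [Finite Q] [TopologicalSpace X] [DiscreteTopology X]
    (δ : Q → X → Q) (init : Q) (A : Set (Set Q))
    (hA : ∀ c ∈ cycles δ init, ∀ d ∈ cycles δ init, c ∈ A → cle0 δ c d → d ∈ A) :
    IsOpen {ξ : ℕ → X | infOcc δ init ξ ∈ A} := by
  rw [isOpen_iff_mem_nhds]
  intro ξ hξ
  obtain ⟨q, hq⟩ := infOcc_nonempty δ init ξ
  obtain ⟨N, -, hN⟩ := hq 0
  have hSopen : IsOpen {η : ℕ → X | ∀ i < N, η i = ξ i} := by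
    have : {η : ℕ → X | ∀ i < N, η i = ξ i}
        = ⋂ i ∈ Finset.range N, (fun η : ℕ → X => η i) ⁻¹' {ξ i} := by
      ext η; simp
    rw [this]
    exact isOpen_biInter_finset fun i _ =>
      (isOpen_discrete _).preimage (continuous_apply i)
  refine Filter.mem_of_superset (hSopen.mem_nhds (by simp)) ?_
  intro η hη
  obtain ⟨r, hr⟩ := infOcc_nonempty δ init η
  obtain ⟨n, hn, hrn⟩ := hr N
  refine hA _ ⟨ξ, rfl⟩ _ ⟨η, rfl⟩ hξ ⟨q, hq, r, hr, ?_⟩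
  have hqN : run δ init η N = q := by
    rw [run_agree δ init ξ η N hη N le_rfl, hN]
  rw [← hqN, ← hrn]
  exact reach_run δ init η N n hn
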